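/- E[ Ĵ(w⁺) ] ≤ Ĵ(w) − (μ/2)(1 − 2μL̂) ‖∇Ĵ(w)‖² + (μ/2)(1 + 2μL̂) ‖d‖² + μ² (L̂/2) ς². (This is the descent relation of the paper's Lemma 9 for the centroid iterate under perturbed stochastic gradient descent, stated with all constants explicit.) -/

import Mathlib

open MeasureTheory

lemma descent_lemma {F : Type*} [NormedAddCommGroup F] [InnerProductSpace ℝ F] [CompleteSpace F]
    (f : F → ℝ) (hdiff : Differentiable ℝ f) (L : ℝ)
    (hlip : ∀ u v, ‖gradient f u - gradient f v‖ ≤ L * ‖u - v‖) (x v : F) :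
    f (x + v) ≤ f x + inner ℝ (gradient f x) v + L / 2 * ‖v‖ ^ 2 := by
  set g : ℝ → ℝ := fun t =>
    f (x + t • v) - t * inner ℝ (gradient f x) v - L / 2 * t ^ 2 * ‖v‖ ^ 2 with hg
  have hderiv : ∀ t : ℝ, HasDerivAt g
      ((inner ℝ (gradient f (x + t • v)) v : ℝ) - inner ℝ (gradient f x) v - L * t * ‖v‖ ^ 2) t := by
    intro t
    have h1 : HasDerivAt (fun t : ℝ => x + t • v) v t := by
      simpa using ((hasDerivAt_id t).smul_const v).const_add x
    have h2 := ((hdiff (x + t • v)).hasGradientAt.hasFDerivAt).comp_hasDerivAt t h1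
    have h3 : HasDerivAt (fun t : ℝ => t * (inner ℝ (gradient f x) v : ℝ))
        (inner ℝ (gradient f x) v) t := by
      simpa using (hasDerivAt_mul_const (inner ℝ (gradient f x) v : ℝ) (x := t))
    have h4 : HasDerivAt (fun t : ℝ => L / 2 * t ^ 2 * ‖v‖ ^ 2)
        (L * t * ‖v‖ ^ 2) t := by
      have := ((hasDerivAt_pow 2 t).const_mul (L / 2)).mul_const (‖v‖ ^ 2)
      refine this.congr_deriv ?_
      rw [show (2:ℕ) - 1 = 1 from rfl]; push_cast; ring
    exact (h2.sub h3).sub h4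
  have hanti : AntitoneOn g (Set.Icc (0:ℝ) 1) := by
    apply antitoneOn_of_deriv_nonpos (convex_Icc 0 1)
    · exact fun t _ => (hderiv t).continuousAt.continuousWithinAt
    · exact fun t _ => ((hderiv t).differentiableAt).differentiableWithinAt
    · intro t ht
      rw [interior_Icc] at ht
      rw [(hderiv t).deriv]
      have hcs : (inner ℝ (gradient f (x + t • v) - gradient f x) v : ℝ)
          ≤ ‖gradient f (x + t • v) - gradient f x‖ * ‖v‖ :=
        real_inner_le_norm _ _
      have hl := hlip (x + t • v) x
      have hxy : x + t • v - x = t • v := by abel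
      rw [hxy, norm_smul] at hl
      have hts : ‖t • v‖ = t * ‖v‖ := by
        rw [norm_smul, Real.norm_eq_abs, abs_of_pos ht.1]
      rw [Real.norm_eq_abs, abs_of_pos ht.1] at hl
      have hsub : (inner ℝ (gradient f (x + t • v) - gradient f x) v : ℝ)
          = inner ℝ (gradient f (x + t • v)) v - inner ℝ (gradient f x) v := by
        rw [inner_sub_left]
      have hv : (0:ℝ) ≤ ‖v‖ := norm_nonneg v
      nlinarith [hcs, hl, mul_le_mul_of_nonneg_right hl hv]
  have h01 := hanti (Set.left_mem_Icc.2 zero_le_one) (Set.right_mem_Icc.2 zero_le_one) zero_le_one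
  have hg0 : g 0 = f x := by simp [hg]
  have hg1 : g 1 = f (x + v) - inner ℝ (gradient f x) v - L / 2 * ‖v‖ ^ 2 := by
    simp [hg]
  rw [hg0, hg1] at h01
  linarith


theorem centroid_descent_relation
    (M : ℕ) (μ Lhat ς : ℝ) (hμ : 0 < μ) (hLhat : 0 < Lhat) (hς : 0 < ς)
    (Jhat : EuclideanSpace ℝ (Fin M) → ℝ)
    (hdiff : Differentiable ℝ Jhat)
    (hlip : ∀ u v, ‖gradient Jhat u - gradient Jhat v‖ ≤ Lhat * ‖u - v‖)
    (w d : EuclideanSpace ℝ (Fin M))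
    {Ω : Type*} [MeasurableSpace Ω] (P : Measure Ω) [IsProbabilityMeasure P]
    (s : Ω → EuclideanSpace ℝ (Fin M))
    (hsint : Integrable s P)
    (hsmean : ∫ ω, s ω ∂P = 0)
    (hsvar_int : Integrable (fun ω => ‖s ω‖ ^ 2) P)
    (hsvar : ∫ ω, ‖s ω‖ ^ 2 ∂P ≤ ς ^ 2)
    (hJint : Integrable (fun ω => Jhat (w - μ • (gradient Jhat w + d + s ω))) P) :
    ∫ ω, Jhat (w - μ • (gradient Jhat w + d + s ω)) ∂P
      ≤ Jhat w - (μ / 2) * (1 - 2 * μ * Lhat) * ‖gradient Jhat w‖ ^ 2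
        + (μ / 2) * (1 + 2 * μ * Lhat) * ‖d‖ ^ 2
        + μ ^ 2 * (Lhat / 2) * ς ^ 2 := by
  set g := gradient Jhat w with hgdef
  set a := g + d with hadef
  set C : ℝ := Jhat w - μ * inner ℝ g a + Lhat / 2 * μ ^ 2 * ‖a‖ ^ 2 with hC
  set RHS : Ω → ℝ := fun ω =>
    C + (-μ) * inner ℝ g (s ω) + (Lhat * μ ^ 2) * inner ℝ a (s ω)
      + (Lhat / 2 * μ ^ 2) * ‖s ω‖ ^ 2 with hRHS
  have hpt : ∀ ω, Jhat (w - μ • (g + d + s ω)) ≤ RHS ω := by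
    intro ω
    have h := descent_lemma Jhat hdiff Lhat hlip w (-(μ • (a + s ω)))
    rw [← hgdef] at h
    have hx : w + -(μ • (a + s ω)) = w - μ • (g + d + s ω) := by
      rw [hadef, sub_eq_add_neg]
    rw [hx] at h
    refine h.trans_eq ?_
    have hinner : (inner ℝ g (-(μ • (a + s ω))) : ℝ)
        = -(μ * (inner ℝ g a + inner ℝ g (s ω))) := by
      rw [inner_neg_right, real_inner_smul_right, inner_add_right]
    have hnorm : ‖-(μ • (a + s ω))‖ ^ 2
        = μ ^ 2 * (‖a‖ ^ 2 + 2 * inner ℝ a (s ω) + ‖s ω‖ ^ 2) := by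
      rw [norm_neg, norm_smul, Real.norm_eq_abs, mul_pow, sq_abs,
        norm_add_sq_real]
    rw [hRHS, hinner, hnorm, hC]
    ring
  have hI1 : Integrable (fun ω => (inner ℝ g (s ω) : ℝ)) P := hsint.const_inner g
  have hI2 : Integrable (fun ω => (inner ℝ a (s ω) : ℝ)) P := hsint.const_inner a
  have hB1 : Integrable (fun ω => -μ * inner ℝ g (s ω)) P := hI1.const_mul (-μ)
  have hB2 : Integrable (fun ω => Lhat * μ ^ 2 * inner ℝ a (s ω)) P :=
    hI2.const_mul (Lhat * μ ^ 2)
  have hA3 : Integrable (fun ω => Lhat / 2 * μ ^ 2 * ‖s ω‖ ^ 2) P :=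
    hsvar_int.const_mul (Lhat / 2 * μ ^ 2)
  have hA1 : Integrable (fun ω => C + -μ * inner ℝ g (s ω)) P :=
    (integrable_const C).add hB1
  have hA2 : Integrable (fun ω => C + -μ * inner ℝ g (s ω)
      + Lhat * μ ^ 2 * inner ℝ a (s ω)) P := hA1.add hB2
  have hRint : Integrable RHS P := by
    rw [hRHS]; exact hA2.add hA3
  have hle : ∫ ω, Jhat (w - μ • (g + d + s ω)) ∂P ≤ ∫ ω, RHS ω ∂P :=
    integral_mono hJint hRint hpt
  have hm1 : ∫ ω, (inner ℝ g (s ω) : ℝ) ∂P = 0 := by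
    rw [integral_inner hsint g, hsmean, inner_zero_right]
  have hm2 : ∫ ω, (inner ℝ a (s ω) : ℝ) ∂P = 0 := by
    rw [integral_inner hsint a, hsmean, inner_zero_right]
  have hV0 : 0 ≤ ∫ ω, ‖s ω‖ ^ 2 ∂P := integral_nonneg fun ω => sq_nonneg _
  have hRint_eq : ∫ ω, RHS ω ∂P
      = C + (Lhat / 2 * μ ^ 2) * ∫ ω, ‖s ω‖ ^ 2 ∂P := by
    rw [hRHS, integral_add hA2 hA3, integral_add hA1 hB2,
      integral_add (integrable_const C) hB1,
      integral_const, integral_const_mul, integral_const_mul, integral_const_mul,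
      hm1, hm2]
    simp
  rw [hRint_eq] at hle
  refine hle.trans ?_
  rw [hC, hadef]
  have hexp : ‖g + d‖ ^ 2 = ‖g‖ ^ 2 + 2 * inner ℝ g d + ‖d‖ ^ 2 := norm_add_sq_real g d
  have hia : (inner ℝ g (g + d) : ℝ) = ‖g‖ ^ 2 + inner ℝ g d := by
    rw [inner_add_right, real_inner_self_eq_norm_sq]
  have hcs : |(inner ℝ g d : ℝ)| ≤ ‖g‖ * ‖d‖ := abs_real_inner_le_norm g d
  have hcs1 := (abs_le.mp hcs).1
  have hcs2 := (abs_le.mp hcs).2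
  have hsq := sq_nonneg (‖g‖ - ‖d‖)
  have hsq2 := sq_nonneg (‖g‖ + ‖d‖)
  set V := ∫ ω, ‖s ω‖ ^ 2 ∂P
  rw [hia, hexp]
  nlinarith [mul_pos hμ hLhat, mul_pos (mul_pos hμ hμ) hLhat, sq_nonneg μ,
    mul_le_mul_of_nonneg_left hsvar (by positivity : (0:ℝ) ≤ Lhat / 2 * μ ^ 2),
    mul_le_mul_of_nonneg_left hcs2 hμ.le,
    mul_le_mul_of_nonneg_left hcs1 hμ.le,
    mul_le_mul_of_nonneg_left hcs2 (by positivity : (0:ℝ) ≤ Lhat * μ ^ 2),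
    mul_le_mul_of_nonneg_left hcs1 (by positivity : (0:ℝ) ≤ Lhat * μ ^ 2),
    mul_le_mul_of_nonneg_left hsq hμ.le,
    mul_le_mul_of_nonneg_left hsq (by positivity : (0:ℝ) ≤ Lhat * μ ^ 2)]
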